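/- Under the hypotheses of the previous statement (perfect fluid space-time with divergence-free Weyl tensor, u closed, B nowhere zero), the 1-form ω_k = ∇_k γ /(2B(n−1)) appearing in the torse-forming equation ∇_k u_j = ω_k u_j + f g_{kj} is closed: ∇_j ω_k − ∇_k ω_j = 0. Hence u is a concircular vector field. -/
import Mathlib


/-!
STATEMENT 5.  Under the hypotheses of statement 4 (perfect fluid space-time,
divergence-free Weyl tensor, u closed, B nowhere zero), the 1-form
ω_k = ∇_k γ/(2B(n-1)) is closed, hence u is a concircular vector field.
Here `D2γ x j k` denotes the second covariant derivative ∇_j ∇_k γ of the scalar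
γ = (n-2)A + B (symmetric, since γ is a scalar), so that by the quotient rule
∇_j ω_k = (1/(2(n-1))) (B ∇_j∇_k γ - (∇_k γ)(∇_j B))/B².
The conclusion is ∇_j ω_k - ∇_k ω_j = 0.
-/
lemma contract_delta' {n : ℕ} (ginv g : Fin n → Fin n → ℝ)
    (h : ∀ i j, ∑ m, ginv i m * g m j = if i = j then (1:ℝ) else 0)
    (v : Fin n → ℝ) (p : Fin n) :
    ∑ a, v a * ∑ m, ginv a m * g m p = v p := by
  simp [h]

lemma sum2_factor_const {n : ℕ} (c : ℝ) (f h : Fin n → ℝ) :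
    ∑ a, ∑ b, c * (f a * h b) = c * ((∑ a, f a) * (∑ b, h b)) := by
  rw [Fintype.sum_mul_sum, Finset.mul_sum]
  refine Finset.sum_congr rfl fun a _ => ?_
  rw [Finset.mul_sum]


theorem perfectFluid_omega_closed_concircular
    (n : ℕ) (hn : 4 ≤ n) (M : Type*)
    (g ginv : M → Fin n → Fin n → ℝ)
    (A B : M → ℝ) (DA DB : M → Fin n → ℝ)
    (u : M → Fin n → ℝ) (Du : M → Fin n → Fin n → ℝ)
    (D2γ : M → Fin n → Fin n → ℝ)
    (hg : ∀ x i j, g x i j = g x j i)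
    (hginv : ∀ x i j, ∑ m, ginv x i m * g x m j = if i = j then (1:ℝ) else 0)
    (hginvsymm : ∀ x i j, ginv x i j = ginv x j i)
    -- u is a unit timelike vector field: u^j u_j = -1
    (hunit : ∀ x, ∑ i, ∑ j, ginv x i j * u x i * u x j = -1)
    -- u has constant length, hence u^l ∇_k u_l = 0
    (hDu : ∀ x k, ∑ l, ∑ m, ginv x l m * u x m * Du x k l = 0)
    -- contracted Bianchi identity ∇^m R_{jm} = (1/2)∇_j R
    (hBianchi : ∀ x j, ∑ a, ∑ m, ginv x a m *
        (DA x a * g x m j + DB x a * u x m * u x j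
          + B x * (Du x a m * u x j + u x m * Du x a j))
      = (1/2) * ((n:ℝ) * DA x j - DB x j))
    -- ∇_m C_{jkl}{}^m = 0, in its equivalent Codazzi form for the Ricci tensor
    (hWeyl : ∀ x k l j,
        (DA x k * g x j l + DB x k * u x j * u x l
          + B x * (Du x k j * u x l + u x j * Du x k l))
        - (DA x l * g x j k + DB x l * u x j * u x k
          + B x * (Du x l j * u x k + u x j * Du x l k))
      = (1/(2*((n:ℝ) - 1))) * (g x j l * ((n:ℝ) * DA x k - DB x k)
          - g x j k * ((n:ℝ) * DA x l - DB x l)))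
    -- B nowhere zero
    (hB : ∀ x, B x ≠ 0)
    -- u is closed
    (hclosed : ∀ x k j, Du x k j = Du x j k)
    -- second covariant derivative of the scalar γ is symmetric
    (hD2γsymm : ∀ x j k, D2γ x j k = D2γ x k j) :
    -- conclusion: ∇_j ω_k - ∇_k ω_j = 0, i.e. ω is closed and u is concircular
    ∀ x j k,
      (1/(2*((n:ℝ) - 1))) * ((B x * D2γ x j k
          - (((n:ℝ) - 2) * DA x k + DB x k) * DB x j) / (B x)^2)
      - (1/(2*((n:ℝ) - 1))) * ((B x * D2γ x k j
          - (((n:ℝ) - 2) * DA x j + DB x j) * DB x k) / (B x)^2) = 0 := by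
  intro x j k
  have hn' : (4:ℝ) ≤ (n:ℝ) := by exact_mod_cast hn
  have h2 : (2*((n:ℝ)-1)) ≠ 0 := by nlinarith
  have h4 : (2*(n:ℝ)-4) ≠ 0 := by nlinarith
  set U : Fin n → ℝ := fun a => ∑ b, ginv x a b * u x b with hU
  -- basic contractions
  have hUg : ∀ p, ∑ a, U a * g x a p = u x p := by
    intro p
    calc ∑ a, U a * g x a p
        = ∑ a, ∑ b, u x b * (ginv x b a * g x a p) := by
          refine Finset.sum_congr rfl fun a _ => ?_
          simp only [hU]
          rw [Finset.sum_mul]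
          refine Finset.sum_congr rfl fun b _ => ?_
          rw [hginvsymm x a b]; ring
      _ = ∑ b, ∑ a, u x b * (ginv x b a * g x a p) := Finset.sum_comm
      _ = ∑ b, u x b * ∑ a, ginv x b a * g x a p := by
          refine Finset.sum_congr rfl fun b _ => ?_
          rw [Finset.mul_sum]
      _ = u x p := contract_delta' (ginv x) (g x) (hginv x) (u x) p
  have hUu : ∑ a, U a * u x a = -1 := by
    calc ∑ a, U a * u x a
        = ∑ a, ∑ b, ginv x a b * u x a * u x b := by
          refine Finset.sum_congr rfl fun a _ => ?_
          simp only [hU]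
          rw [Finset.sum_mul]
          exact Finset.sum_congr rfl fun b _ => by ring
      _ = -1 := hunit x
  have hUDu : ∀ p, ∑ a, U a * Du x p a = 0 := by
    intro p
    calc ∑ a, U a * Du x p a
        = ∑ a, ∑ b, ginv x a b * u x b * Du x p a := by
          refine Finset.sum_congr rfl fun a _ => ?_
          simp only [hU]
          rw [Finset.sum_mul]
      _ = 0 := hDu x p
  -- E2 : contracted Bianchi identity
  have hL : ∀ p, (∑ a, ∑ m, ginv x a m *
        (DA x a * g x m p + DB x a * u x m * u x p
          + B x * (Du x a m * u x p + u x m * Du x a p)))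
      = (∑ a, DA x a * ∑ m, ginv x a m * g x m p)
        + ((∑ b, U b * DB x b) * u x p
        + (B x * ((∑ a, ∑ m, ginv x a m * Du x a m) * u x p)
        + B x * ∑ a, U a * Du x p a)) := by
    intro p
    simp only [hU, Finset.mul_sum, Finset.sum_mul, ← Finset.sum_add_distrib]
    refine Finset.sum_congr rfl fun a _ => ?_
    try simp only [← Finset.sum_add_distrib]
    refine Finset.sum_congr rfl fun m _ => ?_
    rw [hclosed x a p]
    ring
  have hE2' : ∀ p, 2*DA x p + 2*(∑ b, U b * DB x b)*u x p
      + 2*(B x*(∑ a, ∑ m, ginv x a m * Du x a m))*u x p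
      = (n:ℝ)*DA x p - DB x p := by
    intro p
    have h := hBianchi x p
    rw [hL p, contract_delta' (ginv x) (g x) (hginv x) (DA x) p, hUDu p] at h
    linarith
  -- E1 : doubly contracted Weyl/Codazzi identity
  have hclear : ∀ Y : ℝ, 2*((n:ℝ)-1) * ((1/(2*((n:ℝ)-1))) * Y) = Y := by
    intro Y
    rw [← mul_assoc, mul_one_div, div_self h2, one_mul]
  have hW : ∀ p, (∑ a, ∑ b, U a * U b *
      ((DA x p * g x a b + DB x p * u x a * u x b
          + B x * (Du x p a * u x b + u x a * Du x p b))
        - (DA x b * g x a p + DB x b * u x a * u x p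
          + B x * (Du x b a * u x p + u x a * Du x b p))))
    = ∑ a, ∑ b, U a * U b *
      ((1/(2*((n:ℝ)-1))) * (g x a b * ((n:ℝ)*DA x p - DB x p)
        - g x a p * ((n:ℝ)*DA x b - DB x b))) := by
    intro p
    refine Finset.sum_congr rfl fun a _ => Finset.sum_congr rfl fun b _ => ?_
    rw [hWeyl x p b a]
  have hWL : ∀ p, (∑ a, ∑ b, U a * U b *
      ((DA x p * g x a b + DB x p * u x a * u x b
          + B x * (Du x p a * u x b + u x a * Du x p b))
        - (DA x b * g x a p + DB x b * u x a * u x p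
          + B x * (Du x b a * u x p + u x a * Du x b p))))
      = -DA x p + DB x p - (∑ b, U b * DA x b) * u x p
        + (∑ b, U b * DB x b) * u x p := by
    intro p
    have split : (∑ a, ∑ b, U a * U b *
      ((DA x p * g x a b + DB x p * u x a * u x b
          + B x * (Du x p a * u x b + u x a * Du x p b))
        - (DA x b * g x a p + DB x b * u x a * u x p
          + B x * (Du x b a * u x p + u x a * Du x b p))))
      = (∑ a, ∑ b, DA x p * (U a * (U b * g x a b)))
        + (∑ a, ∑ b, DB x p * ((U a * u x a) * (U b * u x b)))
        + (∑ a, ∑ b, B x * ((U a * Du x p a) * (U b * u x b)))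
        + (∑ a, ∑ b, B x * ((U a * u x a) * (U b * Du x p b)))
        - (∑ a, ∑ b, (1:ℝ) * ((U a * g x a p) * (U b * DA x b)))
        - (∑ a, ∑ b, u x p * ((U a * u x a) * (U b * DB x b)))
        - (∑ a, ∑ b, (B x * u x p) * (U a * (U b * Du x b a)))
        - (∑ a, ∑ b, B x * ((U a * u x a) * (U b * Du x b p))) := by
      simp only [← Finset.sum_add_distrib, ← Finset.sum_sub_distrib]
      refine Finset.sum_congr rfl fun a _ => ?_
      try simp only [← Finset.sum_add_distrib, ← Finset.sum_sub_distrib]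
      refine Finset.sum_congr rfl fun b _ => ?_
      ring
    rw [split]
    have e1 : (∑ a, ∑ b, DA x p * (U a * (U b * g x a b)))
        = DA x p * ∑ a, U a * ∑ b, U b * g x b a := by
      rw [Finset.mul_sum]
      refine Finset.sum_congr rfl fun a _ => ?_
      rw [Finset.mul_sum, Finset.mul_sum]
      refine Finset.sum_congr rfl fun b _ => ?_
      rw [hg x a b]
    have e7 : (∑ a, ∑ b, (B x * u x p) * (U a * (U b * Du x b a)))
        = (B x * u x p) * ∑ a, U a * ∑ b, U b * Du x a b := by
      rw [Finset.mul_sum]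
      refine Finset.sum_congr rfl fun a _ => ?_
      rw [Finset.mul_sum, Finset.mul_sum]
      refine Finset.sum_congr rfl fun b _ => ?_
      rw [hclosed x b a]
    have e8 : (∑ a, ∑ b, B x * ((U a * u x a) * (U b * Du x b p)))
        = ∑ a, ∑ b, B x * ((U a * u x a) * (U b * Du x p b)) := by
      refine Finset.sum_congr rfl fun a _ => Finset.sum_congr rfl fun b _ => ?_
      rw [hclosed x b p]
    rw [e1, e7, e8, sum2_factor_const (DB x p) (fun a => U a * u x a) (fun b => U b * u x b),
      sum2_factor_const (B x) (fun a => U a * Du x p a) (fun b => U b * u x b),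
      sum2_factor_const (B x) (fun a => U a * u x a) (fun b => U b * Du x p b),
      sum2_factor_const (1:ℝ) (fun a => U a * g x a p) (fun b => U b * DA x b),
      sum2_factor_const (u x p) (fun a => U a * u x a) (fun b => U b * DB x b)]
    simp only [hUg, hUDu, hUu, mul_zero, zero_mul, Finset.sum_const_zero]
    ring
  have hsplit : ∑ b, U b * ((n:ℝ)*DA x b - DB x b)
      = (n:ℝ)*(∑ b, U b * DA x b) - ∑ b, U b * DB x b := by
    rw [Finset.mul_sum, ← Finset.sum_sub_distrib]
    exact Finset.sum_congr rfl fun b _ => by ring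
  have hWR : ∀ p, (∑ a, ∑ b, U a * U b *
      ((1/(2*((n:ℝ)-1))) * (g x a b * ((n:ℝ)*DA x p - DB x p)
        - g x a p * ((n:ℝ)*DA x b - DB x b))))
      = (1/(2*((n:ℝ)-1))) * (-(((n:ℝ)*DA x p - DB x p))
          - u x p * ((n:ℝ)*(∑ b, U b * DA x b) - (∑ b, U b * DB x b))) := by
    intro p
    have split : (∑ a, ∑ b, U a * U b *
      ((1/(2*((n:ℝ)-1))) * (g x a b * ((n:ℝ)*DA x p - DB x p)
        - g x a p * ((n:ℝ)*DA x b - DB x b))))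
      = (∑ a, ∑ b, ((1/(2*((n:ℝ)-1))) * ((n:ℝ)*DA x p - DB x p)) * (U a * (U b * g x a b)))
        - (∑ a, ∑ b, (1/(2*((n:ℝ)-1))) * ((U a * g x a p) * (U b * ((n:ℝ)*DA x b - DB x b)))) := by
      simp only [← Finset.sum_sub_distrib]
      refine Finset.sum_congr rfl fun a _ => ?_
      try simp only [← Finset.sum_sub_distrib]
      refine Finset.sum_congr rfl fun b _ => ?_
      ring
    rw [split]
    have e1 : (∑ a, ∑ b, ((1/(2*((n:ℝ)-1))) * ((n:ℝ)*DA x p - DB x p)) * (U a * (U b * g x a b)))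
        = ((1/(2*((n:ℝ)-1))) * ((n:ℝ)*DA x p - DB x p)) * ∑ a, U a * ∑ b, U b * g x b a := by
      rw [Finset.mul_sum]
      refine Finset.sum_congr rfl fun a _ => ?_
      rw [Finset.mul_sum, Finset.mul_sum]
      refine Finset.sum_congr rfl fun b _ => ?_
      rw [hg x a b]
    rw [e1, sum2_factor_const (1/(2*((n:ℝ)-1))) (fun a => U a * g x a p)
        (fun b => U b * ((n:ℝ)*DA x b - DB x b))]
    simp only [hUg, hUu, hsplit]
    ring
  have hE1' : ∀ p, 2*((n:ℝ)-1) * (-DA x p + DB x p - (∑ b, U b * DA x b) * u x p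
        + (∑ b, U b * DB x b) * u x p)
      = -(((n:ℝ)*DA x p - DB x p))
          - u x p * ((n:ℝ)*(∑ b, U b * DA x b) - (∑ b, U b * DB x b)) := by
    intro p
    have h := hW p
    rw [hWL p, hWR p] at h
    rw [h]
    exact hclear _
  -- derived proportionalities
  have hDBp : ∀ p, (2*(n:ℝ)-4) * DB x p
      = (((n:ℝ)-2)*(∑ b, U b * DA x b) + (5-2*(n:ℝ))*(∑ b, U b * DB x b)
          + 2*(B x*(∑ a, ∑ m, ginv x a m * Du x a m))) * u x p := by
    intro p
    linear_combination (hE1' p) - (hE2' p)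
  have hDγp : ∀ p, (2*(n:ℝ)-4) * (((n:ℝ)-2)*DA x p + DB x p)
      = (2*(((n:ℝ)-2)*(∑ b, U b * DA x b) + (5-2*(n:ℝ))*(∑ b, U b * DB x b)
          + 2*(B x*(∑ a, ∑ m, ginv x a m * Du x a m)))
        + (4*(n:ℝ)-8)*((∑ b, U b * DB x b)
          + B x*(∑ a, ∑ m, ginv x a m * Du x a m))) * u x p := by
    intro p
    linear_combination 2*(hDBp p) + (4-2*(n:ℝ))*(hE2' p)
  have hprod : (((n:ℝ)-2)*DA x k + DB x k) * DB x j
      = (((n:ℝ)-2)*DA x j + DB x j) * DB x k := by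
    have key : (2*(n:ℝ)-4) * ((2*(n:ℝ)-4) * ((((n:ℝ)-2)*DA x k + DB x k) * DB x j))
        = (2*(n:ℝ)-4) * ((2*(n:ℝ)-4) * ((((n:ℝ)-2)*DA x j + DB x j) * DB x k)) := by
      linear_combination ((2*(n:ℝ)-4)*DB x j) * (hDγp k)
        + ((2*(((n:ℝ)-2)*(∑ b, U b * DA x b) + (5-2*(n:ℝ))*(∑ b, U b * DB x b)
            + 2*(B x*(∑ a, ∑ m, ginv x a m * Du x a m)))
          + (4*(n:ℝ)-8)*((∑ b, U b * DB x b)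
            + B x*(∑ a, ∑ m, ginv x a m * Du x a m))) * u x k) * (hDBp j)
        - ((2*(n:ℝ)-4)*DB x k) * (hDγp j)
        - ((2*(((n:ℝ)-2)*(∑ b, U b * DA x b) + (5-2*(n:ℝ))*(∑ b, U b * DB x b)
            + 2*(B x*(∑ a, ∑ m, ginv x a m * Du x a m)))
          + (4*(n:ℝ)-8)*((∑ b, U b * DB x b)
            + B x*(∑ a, ∑ m, ginv x a m * Du x a m))) * u x j) * (hDBp k)
    exact mul_left_cancel₀ h4 (mul_left_cancel₀ h4 key)
  rw [hD2γsymm x j k, hprod]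
  ring
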